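/- arXiv:2603.06851 — 3 statements merged into one kernel-verified Lean document; each statement's English description precedes it below -/
import Mathlib

section
/- Let ξ and ζ be independent real-valued random variables with E[ξ] = E[ζ] = 0, E[|ξ|] < ∞, E[|ζ|] < ∞, and suppose ξ and ζ have Lebesgue densities f_ξ and f_ζ that are bounded above by a constant L ≥ 1. Then for every m ∈ ℝ and every π ∈ ℝ, with V = m + ξ and W = m + ζ, one has E[g(m, V, W)] − E[g(π, V, W)] ≤ L·(m − π)². -/
open MeasureTheory ProbabilityTheory
open scoped NNReal ENNReal

/-- The gain from trade: `g p v w = (max v w - min v w) · 1{min v w ≤ p ≤ max v w}`. -/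
noncomputable def gft (p v w : ℝ) : ℝ :=
  if min v w ≤ p ∧ p ≤ max v w then max v w - min v w else 0

lemma gft_comm (p v w : ℝ) : gft p v w = gft p w v := by
  unfold gft; rw [min_comm, max_comm]

lemma gft_shift (p a v w : ℝ) : gft p (a+v) (a+w) = gft (p-a) v w := by
  unfold gft
  rw [min_add_add_left, max_add_add_left]
  have h1 : (a + min v w ≤ p ∧ p ≤ a + max v w) ↔ (min v w ≤ p - a ∧ p - a ≤ max v w) := by
    constructor <;> intro h <;> constructor <;> linarith [h.1, h.2]
  rw [if_congr h1 (by rw [add_sub_add_left_eq_sub (v ⊔ w) (v ⊓ w) a]) rfl]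

lemma gft_neg (p v w : ℝ) : gft (-p) (-v) (-w) = gft p v w := by
  unfold gft
  rw [min_neg_neg, max_neg_neg]
  have h1 : (-max v w ≤ -p ∧ -p ≤ -min v w) ↔ (min v w ≤ p ∧ p ≤ max v w) := by
    constructor <;> intro h <;> constructor <;> linarith [h.1, h.2]
  rw [if_congr h1 (by rw [neg_sub_neg]) rfl]

lemma abs_gft_le (p v w : ℝ) : |gft p v w| ≤ |v| + |w| := by
  unfold gft
  split_ifs with h
  · rcases le_total v w with hvw | hvw
    · rw [max_eq_right hvw, min_eq_left hvw]
      calc |w - v| ≤ |w| + |v| := abs_sub _ _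
        _ = |v| + |w| := add_comm _ _
    · rw [max_eq_left hvw, min_eq_right hvw]
      exact abs_sub _ _
  · simp only [abs_zero]; positivity

lemma gft_of_between {p v w : ℝ} (h1 : min v w ≤ p) (h2 : p ≤ max v w) :
    gft p v w = max v w - min v w := if_pos ⟨h1, h2⟩

lemma gft_of_lt {p v w : ℝ} (h : p < min v w) : gft p v w = 0 :=
  if_neg (by rintro ⟨h1, _⟩; linarith)

lemma gft_of_gt {p v w : ℝ} (h : max v w < p) : gft p v w = 0 :=
  if_neg (by rintro ⟨_, h2⟩; linarith)

lemma D_pos {c x : ℝ} (hc : c < 0) (hx : 0 < x) (y : ℝ) :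
    gft 0 x y - gft c x y = Set.indicator (Set.Ioc c 0) (fun t => x - t) y := by
  rcases le_or_gt y c with h1 | h1
  · have hyx : y ≤ x := by linarith
    rw [gft_of_between (by rw [min_eq_right hyx]; linarith)
        (by rw [max_eq_left hyx]; linarith),
      gft_of_between (by rw [min_eq_right hyx]; linarith)
        (by rw [max_eq_left hyx]; linarith),
      Set.indicator_of_notMem (by simp only [Set.mem_Ioc, not_and]; intro; linarith)]
    ring
  · rcases le_or_gt y 0 with h2 | h2
    · have hyx : y ≤ x := by linarith
      rw [gft_of_between (by rw [min_eq_right hyx]; linarith)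
          (by rw [max_eq_left hyx]; linarith),
        gft_of_lt (by rw [min_eq_right hyx]; linarith),
        Set.indicator_of_mem (Set.mem_Ioc.2 ⟨h1, h2⟩), min_eq_right hyx, max_eq_left hyx]
      ring
    · rw [gft_of_lt (lt_min hx h2), gft_of_lt (by have := lt_min hx h2; linarith),
        Set.indicator_of_notMem (by simp only [Set.mem_Ioc, not_and, not_le]; intro; linarith)]
      ring

lemma D_low {c x : ℝ} (hc : c < 0) (hx : x < c) (y : ℝ) :
    gft 0 x y - gft c x y = Set.indicator (Set.Ico c 0) (fun t => x - t) y := by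
  rcases lt_or_ge y c with h1 | h1
  · rw [gft_of_gt (by have := max_lt hx h1; linarith), gft_of_gt (max_lt hx h1),
      Set.indicator_of_notMem (by simp only [Set.mem_Ico, not_and]; intro; linarith)]
    ring
  · rcases lt_or_ge y 0 with h2 | h2
    · have hxy : x ≤ y := by linarith
      rw [gft_of_gt (by rw [max_eq_right hxy]; exact h2),
        gft_of_between (by rw [min_eq_left hxy]; linarith)
          (by rw [max_eq_right hxy]; linarith),
        Set.indicator_of_mem (Set.mem_Ico.2 ⟨h1, h2⟩), min_eq_left hxy, max_eq_right hxy]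
      ring
    · have hxy : x ≤ y := by linarith
      rw [gft_of_between (by rw [min_eq_left hxy]; linarith)
          (by rw [max_eq_right hxy]; linarith),
        gft_of_between (by rw [min_eq_left hxy]; linarith)
          (by rw [max_eq_right hxy]; linarith),
        Set.indicator_of_notMem (by simp only [Set.mem_Ico, not_and, not_lt]; intro; linarith)]
      ring

lemma D_mid {c x : ℝ} (hx1 : c < x) (hx2 : x < 0) (y : ℝ) :
    gft 0 x y - gft c x y =
      Set.indicator (Set.Ici (0:ℝ)) (fun t => t - x) y
        - Set.indicator (Set.Iic c) (fun t => x - t) y := by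
  rcases le_or_gt y c with h1 | h1
  · have hyx : y ≤ x := by linarith
    rw [gft_of_gt (by rw [max_eq_left hyx]; exact hx2),
      gft_of_between (by rw [min_eq_right hyx]; linarith)
        (by rw [max_eq_left hyx]; linarith),
      Set.indicator_of_notMem (by simp only [Set.mem_Ici, not_le]; linarith),
      Set.indicator_of_mem (Set.mem_Iic.2 h1), min_eq_right hyx, max_eq_left hyx]
  · rcases lt_or_ge y 0 with h2 | h2
    · rw [gft_of_gt (max_lt hx2 h2), gft_of_lt (lt_min hx1 h1),
        Set.indicator_of_notMem (by simp only [Set.mem_Ici, not_le]; linarith),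
        Set.indicator_of_notMem (by simp only [Set.mem_Iic, not_le]; linarith)]
    · have hxy : x ≤ y := by linarith
      rw [gft_of_between (by rw [min_eq_left hxy]; linarith)
          (by rw [max_eq_right hxy]; linarith),
        gft_of_lt (by rw [min_eq_left hxy]; exact hx1),
        Set.indicator_of_mem (Set.mem_Ici.2 h2),
        Set.indicator_of_notMem (by simp only [Set.mem_Iic, not_le]; linarith),
        min_eq_left hxy, max_eq_right hxy]

lemma measurable_gft (p : ℝ) : Measurable (fun q : ℝ × ℝ => gft p q.1 q.2) := by
  unfold gft
  have hmin : Measurable fun q : ℝ × ℝ => min q.1 q.2 :=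
    measurable_fst.min measurable_snd
  have hmax : Measurable fun q : ℝ × ℝ => max q.1 q.2 :=
    measurable_fst.max measurable_snd
  have hset : MeasurableSet {q : ℝ × ℝ | min q.1 q.2 ≤ p ∧ p ≤ max q.1 q.2} := by
    have : {q : ℝ × ℝ | min q.1 q.2 ≤ p ∧ p ≤ max q.1 q.2}
        = {q : ℝ × ℝ | min q.1 q.2 ≤ p} ∩ {q | p ≤ max q.1 q.2} := rfl
    rw [this]
    exact (measurableSet_le hmin measurable_const).inter
      (measurableSet_le measurable_const hmax)
  exact Measurable.ite hset (hmax.sub hmin) measurable_const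

lemma map_neg_withDensity (h : ℝ → ENNReal) (hm : Measurable h) :
    Measure.map (fun x : ℝ => -x) (volume.withDensity h)
      = volume.withDensity (fun x => h (-x)) := by
  ext s hs
  rw [Measure.map_apply measurable_neg hs, withDensity_apply _ (measurable_neg hs),
    withDensity_apply _ hs]
  have := (Measure.measurePreserving_neg (volume : Measure ℝ)).setLIntegral_comp_preimage hs
    (f := fun b => h (-b)) (hm.comp measurable_neg)
  simpa using this

lemma withDensity_singleton (h : ℝ → ENNReal) (a : ℝ) :
    (volume.withDensity h) {a} = 0 :=
  withDensity_absolutelyContinuous volume h (measure_singleton a)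

lemma C_bound {g : ℝ → ℝ} (hg : Measurable g) {L : ℝ} (hL : 0 ≤ L) (hgL : ∀ x, g x ≤ L)
    {c : ℝ} (hc : c < 0) {s : Set ℝ} (hs : MeasurableSet s) (hsub : s ⊆ Set.Ioc c 0) :
    ∫ y in s, (-y) ∂(volume.withDensity (fun x => ENNReal.ofReal (g x)))
      ≤ L * c ^ 2 / 2 := by
  have hgn : Measurable fun x => Real.toNNReal (g x) := measurable_real_toNNReal.comp hg
  have hrw : ∫ y in s, (-y) ∂(volume.withDensity (fun x => ENNReal.ofReal (g x)))
      = ∫ y in s, ((Real.toNNReal (g y) : ℝ)) * (-y) ∂volume := by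
    rw [show (fun x => ENNReal.ofReal (g x))
        = fun x => ((Real.toNNReal (g x) : ℝ≥0) : ℝ≥0∞) from rfl,
      setIntegral_withDensity_eq_setIntegral_smul hgn _ hs]
    simp [NNReal.smul_def, smul_eq_mul]
  rw [hrw]
  have hb : ∀ y ∈ Set.Ioc c 0, ((Real.toNNReal (g y) : ℝ)) * (-y) ≤ L * (-y) := by
    intro y hy
    have h1 : ((Real.toNNReal (g y) : ℝ)) ≤ L := by
      rw [Real.coe_toNNReal']
      exact max_le (hgL y) hL
    have h2 : 0 ≤ -y := by simpa using hy.2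
    exact mul_le_mul_of_nonneg_right h1 h2
  have int2 : IntegrableOn (fun y => L * (-y)) (Set.Ioc c 0) volume :=
    (continuous_const.mul continuous_neg).integrableOn_Ioc
  have int1 : IntegrableOn (fun y => ((Real.toNNReal (g y) : ℝ)) * (-y)) (Set.Ioc c 0) volume := by
    apply Integrable.mono' (integrable_const (L * (-c)))
    · exact ((hgn.coe_nnreal_real).mul measurable_neg).aestronglyMeasurable
    · filter_upwards [ae_restrict_mem measurableSet_Ioc] with y hy
      have h2 : 0 ≤ -y := by simpa using hy.2
      rw [Real.norm_eq_abs, abs_mul, abs_of_nonneg (NNReal.coe_nonneg _), abs_of_nonneg h2]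
      have h1 : ((Real.toNNReal (g y) : ℝ)) ≤ L := by
        rw [Real.coe_toNNReal']
        exact max_le (hgL y) hL
      have h3 : -y ≤ -c := by simpa using hy.1.le
      exact mul_le_mul h1 h3 h2 hL
  calc ∫ y in s, ((Real.toNNReal (g y) : ℝ)) * (-y) ∂volume
      ≤ ∫ y in s, L * (-y) ∂volume := by
        refine setIntegral_mono_on (int1.mono_set hsub) (int2.mono_set hsub) hs ?_
        exact fun y hy => hb y (hsub hy)
    _ ≤ ∫ y in Set.Ioc c 0, L * (-y) ∂volume := by
        refine setIntegral_mono_set int2 ?_ (HasSubset.Subset.eventuallyLE hsub)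
        filter_upwards [ae_restrict_mem measurableSet_Ioc] with y hy
        have h2 : 0 ≤ -y := by simpa using hy.2
        positivity
    _ = L * c ^ 2 / 2 := by
        rw [← intervalIntegral.integral_of_le hc.le, intervalIntegral.integral_const_mul]
        have : (∫ y in c..0, -y) = -((0:ℝ) ^ 2 - c ^ 2) / 2 := by
          rw [intervalIntegral.integral_neg, integral_id]; ring
        rw [this]; ring

lemma setIntegral_const_sub (ρ : Measure ℝ) [IsFiniteMeasure ρ]
    (hρint : Integrable (fun y : ℝ => y) ρ) (x : ℝ) (s : Set ℝ) :
    ∫ y in s, (x - y) ∂ρ = x * (ρ s).toReal - ∫ y in s, y ∂ρ := by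
  rw [integral_sub (integrable_const x) hρint.integrableOn, setIntegral_const, smul_eq_mul,
    mul_comm]
  rfl

lemma ae_eq_Ioc_of_null (ρ : Measure ℝ) {c : ℝ} (hc : c < 0) (h0 : ρ {(0:ℝ)} = 0) :
    (Set.Ioo c 0 : Set ℝ) =ᵐ[ρ] Set.Ioc c 0 := by
  refine MeasureTheory.ae_eq_set.2 ⟨?_, ?_⟩
  · rw [Set.diff_eq_empty.2 Set.Ioo_subset_Ioc_self]; exact measure_empty
  · refine measure_mono_null ?_ h0
    intro y hy
    simp only [Set.mem_diff, Set.mem_Ioc, Set.mem_Ioo, not_and, not_lt] at hy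
    have : y = 0 := le_antisymm hy.1.2 (hy.2 hy.1.1)
    simp [this]

lemma ae_eq_Ico_Ioc (ρ : Measure ℝ) {c : ℝ} (hc : c < 0) (h0 : ρ {(0:ℝ)} = 0)
    (hcs : ρ {c} = 0) : (Set.Ico c 0 : Set ℝ) =ᵐ[ρ] Set.Ioc c 0 := by
  refine MeasureTheory.ae_eq_set.2 ⟨?_, ?_⟩
  · refine measure_mono_null ?_ hcs
    intro y hy
    simp only [Set.mem_diff, Set.mem_Ico, Set.mem_Ioc, not_and, not_le] at hy
    have : y = c := by
      by_contra h
      have h1 : c < y := lt_of_le_of_ne hy.1.1 (Ne.symm h)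
      exact absurd (hy.2 h1) (not_lt.2 hy.1.2.le)
    simp [this]
  · refine measure_mono_null ?_ h0
    intro y hy
    simp only [Set.mem_diff, Set.mem_Ioc, Set.mem_Ico, not_and, not_lt] at hy
    have : y = 0 := le_antisymm hy.1.2 (hy.2 hy.1.1.le)
    simp [this]

lemma inner_eq (ρ : Measure ℝ) [IsProbabilityMeasure ρ]
    (hρint : Integrable (fun y : ℝ => y) ρ)
    (hρmean : ∫ y, y ∂ρ = 0) (h0 : ρ {(0:ℝ)} = 0) {c : ℝ} (hcs : ρ {c} = 0) (hc : c < 0)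
    {x : ℝ} (hx0 : x ≠ 0) (hxc : x ≠ c) :
    ∫ y, (gft 0 x y - gft c x y) ∂ρ
      = (∫ y in Set.Ioc c 0, (-y) ∂ρ) + x * (ρ (Set.Ioc c 0)).toReal
        + Set.indicator (Set.Ioo c 0) (fun t => -t) x := by
  have hIooIoc := ae_eq_Ioc_of_null ρ hc h0
  have hneg : ∀ s : Set ℝ, ∫ y in s, (x - y) ∂ρ
      = x * (ρ s).toReal + ∫ y in s, (-y) ∂ρ := by
    intro s
    rw [setIntegral_const_sub ρ hρint x s, integral_neg]
    ring
  rcases lt_trichotomy x 0 with hxneg | rfl | hxpos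
  · rcases lt_trichotomy x c with hxlt | rfl | hxgt
    · -- x < c
      have e1 : ∫ y, (gft 0 x y - gft c x y) ∂ρ
          = ∫ y in Set.Ico c 0, (x - y) ∂ρ := by
        simp_rw [D_low hc hxlt]
        exact integral_indicator measurableSet_Ico
      rw [e1, setIntegral_congr_set (ae_eq_Ico_Ioc ρ hc h0 hcs), hneg,
        Set.indicator_of_notMem (by simp only [Set.mem_Ioo, not_and]; intro h; linarith)]
      ring
    · exact absurd rfl hxc
    · -- c < x < 0
      have e1 : ∫ y, (gft 0 x y - gft c x y) ∂ρ
          = (∫ y in Set.Ici (0:ℝ), (y - x) ∂ρ) - ∫ y in Set.Iic c, (x - y) ∂ρ := by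
        simp_rw [D_mid hxgt hxneg]
        have i1 : Integrable ((Set.Ici (0:ℝ)).indicator (fun t => t - x)) ρ :=
          Integrable.indicator (by exact hρint.sub (integrable_const x)) measurableSet_Ici
        have i2 : Integrable ((Set.Iic c).indicator (fun t => x - t)) ρ :=
          Integrable.indicator (by exact (integrable_const x).sub hρint) measurableSet_Iic
        rw [integral_sub i1 i2,
          integral_indicator measurableSet_Ici, integral_indicator measurableSet_Iic]
      have e2 : ∫ y in Set.Ici (0:ℝ), (y - x) ∂ρ
          = (∫ y in Set.Ici (0:ℝ), y ∂ρ) - x * (ρ (Set.Ici 0)).toReal := by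
        rw [integral_sub hρint.integrableOn (integrable_const x), setIntegral_const,
          smul_eq_mul, mul_comm]
        rfl
      -- partition facts
      have hdisj1 : Disjoint (Set.Iic c) (Set.Ioo c 0) := by
        rw [Set.disjoint_left]; intro y hy hy'; exact absurd hy'.1 (not_lt.2 hy)
      have hdisj2 : Disjoint (Set.Iic c ∪ Set.Ioo c 0) (Set.Ici (0:ℝ)) := by
        rw [Set.disjoint_left]; rintro y (hy | hy) hy'
        · have h1 : y ≤ c := hy
          have h2 : (0:ℝ) ≤ y := hy'
          linarith
        · have h2 : (0:ℝ) ≤ y := hy'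
          exact absurd hy.2 (not_lt.2 h2)
      have hcover : (Set.Iic c ∪ Set.Ioo c 0) ∪ Set.Ici (0:ℝ) = Set.univ := by
        ext y
        simp only [Set.mem_union, Set.mem_Iic, Set.mem_Ioo, Set.mem_Ici, Set.mem_univ, iff_true]
        rcases le_or_gt y c with h | h
        · exact Or.inl (Or.inl h)
        · rcases lt_or_ge y 0 with h' | h'
          · exact Or.inl (Or.inr ⟨h, h'⟩)
          · exact Or.inr h'
      have hsum_int : (∫ y in Set.Iic c, y ∂ρ) + (∫ y in Set.Ioo c 0, y ∂ρ)
          + (∫ y in Set.Ici (0:ℝ), y ∂ρ) = 0 := by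
        rw [← setIntegral_union hdisj1 measurableSet_Ioo hρint.integrableOn hρint.integrableOn,
          ← setIntegral_union hdisj2 measurableSet_Ici hρint.integrableOn hρint.integrableOn,
          hcover, setIntegral_univ, hρmean]
      have hsum_meas : (ρ (Set.Iic c)).toReal + (ρ (Set.Ioo c 0)).toReal
          + (ρ (Set.Ici (0:ℝ))).toReal = 1 := by
        have h1 : ρ (Set.Iic c) + ρ (Set.Ioo c 0) + ρ (Set.Ici (0:ℝ)) = 1 := by
          rw [← measure_union hdisj1 measurableSet_Ioo,
            ← measure_union hdisj2 measurableSet_Ici, hcover, measure_univ]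
        rw [← ENNReal.toReal_add (measure_ne_top _ _) (measure_ne_top _ _),
          ← ENNReal.toReal_add (by finiteness) (measure_ne_top _ _), h1, ENNReal.toReal_one]
      have hmeq : (ρ (Set.Ioo c 0)).toReal = (ρ (Set.Ioc c 0)).toReal := by
        rw [measure_congr hIooIoc]
      have hieq : (∫ y in Set.Ioo c 0, (-y) ∂ρ) = ∫ y in Set.Ioc c 0, (-y) ∂ρ :=
        setIntegral_congr_set hIooIoc
      have hieq' : (∫ y in Set.Ioo c 0, y ∂ρ) = ∫ y in Set.Ioc c 0, y ∂ρ :=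
        setIntegral_congr_set hIooIoc
      have hnegIoc : (∫ y in Set.Ioc c 0, (-y) ∂ρ) = -∫ y in Set.Ioc c 0, y ∂ρ :=
        integral_neg _
      have hnegIic : (∫ y in Set.Iic c, (-y) ∂ρ) = -∫ y in Set.Iic c, y ∂ρ := integral_neg _
      have hnegIoo : (∫ y in Set.Ioo c 0, (-y) ∂ρ) = -∫ y in Set.Ioo c 0, y ∂ρ := integral_neg _
      rw [e1, e2, hneg, Set.indicator_of_mem (Set.mem_Ioo.2 ⟨hxgt, hxneg⟩), ← hieq, ← hmeq,
        hnegIic, hnegIoo]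
      linear_combination hsum_int - x * hsum_meas
  · exact absurd rfl hx0
  · -- 0 < x
    have e1 : ∫ y, (gft 0 x y - gft c x y) ∂ρ
        = ∫ y in Set.Ioc c 0, (x - y) ∂ρ := by
      simp_rw [D_pos hc hxpos]
      exact integral_indicator measurableSet_Ioc
    rw [e1, hneg, Set.indicator_of_notMem (by
      simp only [Set.mem_Ioo, not_and, not_lt]; intro h; linarith)]
    ring

lemma core (ν ρ : Measure ℝ) [IsProbabilityMeasure ν] [IsProbabilityMeasure ρ]
    (f g : ℝ → ℝ) (hf : Measurable f) (hg : Measurable g)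
    (hν : ν = volume.withDensity (fun x => ENNReal.ofReal (f x)))
    (hρ : ρ = volume.withDensity (fun x => ENNReal.ofReal (g x)))
    {L : ℝ} (hL : 0 ≤ L) (hfL : ∀ x, f x ≤ L) (hgL : ∀ x, g x ≤ L)
    (hνint : Integrable (fun x : ℝ => x) ν) (hρint : Integrable (fun y : ℝ => y) ρ)
    (hνmean : ∫ x, x ∂ν = 0) (hρmean : ∫ y, y ∂ρ = 0)
    {c : ℝ} (hc : c < 0) :
    ∫ q : ℝ × ℝ, (gft 0 q.1 q.2 - gft c q.1 q.2) ∂(ν.prod ρ) ≤ L * c ^ 2 := by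
  have hρ0 : ρ {(0:ℝ)} = 0 := by rw [hρ]; exact withDensity_singleton _ _
  have hρc : ρ {c} = 0 := by rw [hρ]; exact withDensity_singleton _ _
  have hν0 : ν {(0:ℝ)} = 0 := by rw [hν]; exact withDensity_singleton _ _
  have hνc : ν {c} = 0 := by rw [hν]; exact withDensity_singleton _ _
  -- integrability of the integrand on the product measure
  have hDm : AEStronglyMeasurable (fun q : ℝ × ℝ => gft 0 q.1 q.2 - gft c q.1 q.2) (ν.prod ρ) :=
    ((measurable_gft 0).sub (measurable_gft c)).aestronglyMeasurable
  have hBint : Integrable (fun q : ℝ × ℝ => 2 * (|q.1| * 1 + 1 * |q.2|)) (ν.prod ρ) :=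
    ((hνint.abs.mul_prod (integrable_const 1)).add
      ((integrable_const 1).mul_prod hρint.abs)).const_mul 2
  have hD : Integrable (fun q : ℝ × ℝ => gft 0 q.1 q.2 - gft c q.1 q.2) (ν.prod ρ) := by
    refine hBint.mono' hDm ?_
    refine Filter.Eventually.of_forall fun q => ?_
    have h1 := abs_gft_le 0 q.1 q.2
    have h2 := abs_gft_le c q.1 q.2
    have h3 : |gft 0 q.1 q.2 - gft c q.1 q.2| ≤ |gft 0 q.1 q.2| + |gft c q.1 q.2| := abs_sub _ _
    rw [Real.norm_eq_abs]
    calc |gft 0 q.1 q.2 - gft c q.1 q.2| ≤ (|q.1| + |q.2|) + (|q.1| + |q.2|) := by linarith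
      _ = 2 * (|q.1| * 1 + 1 * |q.2|) := by ring
  rw [integral_prod _ hD]
  -- the inner integral, for ν-a.e. x
  have hae : ∀ᵐ x ∂ν, x ≠ 0 ∧ x ≠ c := by
    have h1 : ∀ᵐ x ∂ν, x ≠ 0 := by
      rw [ae_iff]; simpa [Set.setOf_eq_eq_singleton'] using hν0
    have h2 : ∀ᵐ x ∂ν, x ≠ c := by
      rw [ae_iff]; simpa [Set.setOf_eq_eq_singleton'] using hνc
    filter_upwards [h1, h2] with x hx1 hx2 using ⟨hx1, hx2⟩
  have hcongr : (∫ x, ∫ y, (gft 0 x y - gft c x y) ∂ρ ∂ν)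
      = ∫ x, ((∫ y in Set.Ioc c 0, (-y) ∂ρ) + x * (ρ (Set.Ioc c 0)).toReal
          + Set.indicator (Set.Ioo c 0) (fun t => -t) x) ∂ν := by
    refine integral_congr_ae ?_
    filter_upwards [hae] with x hx
    exact inner_eq ρ hρint hρmean hρ0 hρc hc hx.1 hx.2
  rw [hcongr]
  have hint1 : Integrable (fun x : ℝ => (∫ y in Set.Ioc c 0, (-y) ∂ρ)
      + x * (ρ (Set.Ioc c 0)).toReal) ν :=
    (integrable_const _).add (hνint.mul_const _)
  have hint2 : Integrable ((Set.Ioo c 0).indicator (fun t : ℝ => -t)) ν :=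
    Integrable.indicator (by exact hνint.neg) measurableSet_Ioo
  have hsplit : (∫ x, ((∫ y in Set.Ioc c 0, (-y) ∂ρ) + x * (ρ (Set.Ioc c 0)).toReal
        + Set.indicator (Set.Ioo c 0) (fun t => -t) x) ∂ν)
      = (∫ y in Set.Ioc c 0, (-y) ∂ρ) + (∫ x, x ∂ν) * (ρ (Set.Ioc c 0)).toReal
        + ∫ x in Set.Ioo c 0, (-x) ∂ν := by
    rw [integral_add hint1 hint2, integral_add (integrable_const _) (hνint.mul_const _),
      integral_const, integral_mul_const, integral_indicator measurableSet_Ioo]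
    simp [measure_univ]
  rw [hsplit, hνmean, zero_mul, add_zero]
  have b1 : (∫ y in Set.Ioc c 0, (-y) ∂ρ) ≤ L * c ^ 2 / 2 := by
    rw [hρ]; exact C_bound hg hL hgL hc measurableSet_Ioc subset_rfl
  have b2 : (∫ x in Set.Ioo c 0, (-x) ∂ν) ≤ L * c ^ 2 / 2 := by
    rw [hν]; exact C_bound hf hL hfL hc measurableSet_Ioo Set.Ioo_subset_Ioc_self
  linarith

lemma core' (ν ρ : Measure ℝ) [IsProbabilityMeasure ν] [IsProbabilityMeasure ρ]
    (f g : ℝ → ℝ) (hf : Measurable f) (hg : Measurable g)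
    (hν : ν = volume.withDensity (fun x => ENNReal.ofReal (f x)))
    (hρ : ρ = volume.withDensity (fun x => ENNReal.ofReal (g x)))
    {L : ℝ} (hL : 0 ≤ L) (hfL : ∀ x, f x ≤ L) (hgL : ∀ x, g x ≤ L)
    (hνint : Integrable (fun x : ℝ => x) ν) (hρint : Integrable (fun y : ℝ => y) ρ)
    (hνmean : ∫ x, x ∂ν = 0) (hρmean : ∫ y, y ∂ρ = 0)
    (c : ℝ) :
    ∫ q : ℝ × ℝ, (gft 0 q.1 q.2 - gft c q.1 q.2) ∂(ν.prod ρ) ≤ L * c ^ 2 := by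
  rcases lt_trichotomy c 0 with hc | rfl | hc
  · exact core ν ρ f g hf hg hν hρ hL hfL hgL hνint hρint hνmean hρmean hc
  · simp only [sub_self, integral_zero]
    positivity
  · -- reduce to the negative case by reflecting everything
    set ν' := Measure.map (fun x : ℝ => -x) ν with hν'def
    set ρ' := Measure.map (fun x : ℝ => -x) ρ with hρ'def
    have hna : AEMeasurable (fun x : ℝ => -x) ν := measurable_neg.aemeasurable
    have hna' : AEMeasurable (fun x : ℝ => -x) ρ := measurable_neg.aemeasurable
    haveI : IsProbabilityMeasure ν' := Measure.isProbabilityMeasure_map hna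
    haveI : IsProbabilityMeasure ρ' := Measure.isProbabilityMeasure_map hna'
    have hν' : ν' = volume.withDensity (fun x => ENNReal.ofReal (f (-x))) := by
      rw [hν'def, hν, map_neg_withDensity (fun x => ENNReal.ofReal (f x))
        (by exact ENNReal.measurable_ofReal.comp hf)]
    have hρ' : ρ' = volume.withDensity (fun x => ENNReal.ofReal (g (-x))) := by
      rw [hρ'def, hρ, map_neg_withDensity (fun x => ENNReal.ofReal (g x))
        (by exact ENNReal.measurable_ofReal.comp hg)]
    have hmsν : AEStronglyMeasurable (fun x : ℝ => x) (Measure.map (fun x : ℝ => -x) ν) :=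
      aestronglyMeasurable_id
    have hmsρ : AEStronglyMeasurable (fun x : ℝ => x) (Measure.map (fun x : ℝ => -x) ρ) :=
      aestronglyMeasurable_id
    have hν'int : Integrable (fun x : ℝ => x) ν' := by
      rw [hν'def, integrable_map_measure hmsν hna]
      exact hνint.neg
    have hρ'int : Integrable (fun x : ℝ => x) ρ' := by
      rw [hρ'def, integrable_map_measure hmsρ hna']
      exact hρint.neg
    have hν'mean : ∫ x, x ∂ν' = 0 := by
      rw [hν'def, integral_map hna hmsν]
      rw [show (fun x : ℝ => -x) = fun x : ℝ => -(x) from rfl, integral_neg, hνmean, neg_zero]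
    have hρ'mean : ∫ x, x ∂ρ' = 0 := by
      rw [hρ'def, integral_map hna' hmsρ]
      rw [show (fun x : ℝ => -x) = fun x : ℝ => -(x) from rfl, integral_neg, hρmean, neg_zero]
    have key := core ν' ρ' (fun x => f (-x)) (fun x => g (-x))
      (hf.comp measurable_neg) (hg.comp measurable_neg) hν' hρ'
      hL (fun x => hfL (-x)) (fun x => hgL (-x)) hν'int hρ'int hν'mean hρ'mean
      (neg_neg_iff_pos.2 hc |>.trans_le le_rfl : -c < 0)
    have htrans : ∫ q : ℝ × ℝ, (gft 0 q.1 q.2 - gft (-c) q.1 q.2) ∂(ν'.prod ρ')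
        = ∫ q : ℝ × ℝ, (gft 0 q.1 q.2 - gft c q.1 q.2) ∂(ν.prod ρ) := by
      rw [hν'def, hρ'def, Measure.map_prod_map _ _ measurable_neg measurable_neg,
        integral_map (measurable_neg.prodMap measurable_neg).aemeasurable
          (f := fun q : ℝ × ℝ => gft 0 q.1 q.2 - gft (-c) q.1 q.2)
          ((measurable_gft 0).sub (measurable_gft (-c))).aestronglyMeasurable]
      refine integral_congr_ae (Filter.Eventually.of_forall fun q => ?_)
      have h1 : gft 0 (-q.1) (-q.2) = gft 0 q.1 q.2 := by
        have := gft_neg 0 q.1 q.2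
        rwa [neg_zero] at this
      have h2 : gft (-c) (-q.1) (-q.2) = gft c q.1 q.2 := gft_neg c q.1 q.2
      show gft 0 (-q.1) (-q.2) - gft (-c) (-q.1) (-q.2) = _
      rw [h1, h2]
    rw [htrans] at key
    calc ∫ q : ℝ × ℝ, (gft 0 q.1 q.2 - gft c q.1 q.2) ∂(ν.prod ρ)
        ≤ L * (-c) ^ 2 := key
      _ = L * c ^ 2 := by ring

/-- **Generalized self-bounding property** (Lemma 1).  If `ξ, ζ` are independent,
zero-mean, integrable real random variables with Lebesgue densities bounded by `L ≥ 1`,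
then for every `m, π ∈ ℝ`, with `V = m + ξ` and `W = m + ζ`,
`E[g(m,V,W)] − E[g(π,V,W)] ≤ L·(m − π)²`. -/
theorem generalized_self_bounding
    {Ω : Type*} [MeasurableSpace Ω] {μ : Measure Ω} [IsProbabilityMeasure μ]
    (ξ ζ : Ω → ℝ) (hξm : Measurable ξ) (hζm : Measurable ζ)
    (hindep : IndepFun ξ ζ μ)
    (hξint : Integrable ξ μ) (hζint : Integrable ζ μ)
    (hξmean : ∫ ω, ξ ω ∂μ = 0) (hζmean : ∫ ω, ζ ω ∂μ = 0)
    (fξ fζ : ℝ → ℝ) (hfξm : Measurable fξ) (hfζm : Measurable fζ)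
    (hdξ : Measure.map ξ μ = volume.withDensity (fun x => ENNReal.ofReal (fξ x)))
    (hdζ : Measure.map ζ μ = volume.withDensity (fun x => ENNReal.ofReal (fζ x)))
    (L : ℝ) (hL : 1 ≤ L)
    (hfξL : ∀ x, fξ x ≤ L) (hfζL : ∀ x, fζ x ≤ L)
    (m π : ℝ) :
    (∫ ω, gft m (m + ξ ω) (m + ζ ω) ∂μ) - (∫ ω, gft π (m + ξ ω) (m + ζ ω) ∂μ)
      ≤ L * (m - π) ^ 2 := by
  set c : ℝ := π - m with hcdef
  have hshift0 : ∀ ω, gft m (m + ξ ω) (m + ζ ω) = gft 0 (ξ ω) (ζ ω) := by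
    intro ω; rw [gft_shift, sub_self]
  have hshiftc : ∀ ω, gft π (m + ξ ω) (m + ζ ω) = gft c (ξ ω) (ζ ω) := by
    intro ω; rw [gft_shift]
  -- integrability of both integrands
  have hmeas : ∀ p : ℝ, AEStronglyMeasurable (fun ω => gft p (ξ ω) (ζ ω)) μ := by
    intro p
    exact ((measurable_gft p).comp (hξm.prodMk hζm)).aestronglyMeasurable
  have hintg : ∀ p : ℝ, Integrable (fun ω => gft p (ξ ω) (ζ ω)) μ := by
    intro p
    refine (hξint.abs.add hζint.abs).mono' (hmeas p) ?_
    refine Filter.Eventually.of_forall fun ω => ?_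
    rw [Real.norm_eq_abs]
    exact abs_gft_le p (ξ ω) (ζ ω)
  have hdiff : (∫ ω, gft m (m + ξ ω) (m + ζ ω) ∂μ) - (∫ ω, gft π (m + ξ ω) (m + ζ ω) ∂μ)
      = ∫ ω, (gft 0 (ξ ω) (ζ ω) - gft c (ξ ω) (ζ ω)) ∂μ := by
    simp_rw [hshift0, hshiftc]
    rw [integral_sub (hintg 0) (hintg c)]
  rw [hdiff]
  -- pass to the joint law
  have hjoint : μ.map (fun ω => (ξ ω, ζ ω)) = (μ.map ξ).prod (μ.map ζ) :=
    (indepFun_iff_map_prod_eq_prod_map_map hξm.aemeasurable hζm.aemeasurable).1 hindep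
  have htoprod : ∫ ω, (gft 0 (ξ ω) (ζ ω) - gft c (ξ ω) (ζ ω)) ∂μ
      = ∫ q : ℝ × ℝ, (gft 0 q.1 q.2 - gft c q.1 q.2) ∂((μ.map ξ).prod (μ.map ζ)) := by
    rw [← hjoint, integral_map (hξm.prodMk hζm).aemeasurable
      (f := fun q : ℝ × ℝ => gft 0 q.1 q.2 - gft c q.1 q.2)
      ((measurable_gft 0).sub (measurable_gft c)).aestronglyMeasurable]
  rw [htoprod]
  -- set up the hypotheses of `core'`
  haveI : IsProbabilityMeasure (μ.map ξ) := Measure.isProbabilityMeasure_map hξm.aemeasurable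
  haveI : IsProbabilityMeasure (μ.map ζ) := Measure.isProbabilityMeasure_map hζm.aemeasurable
  have hmsξ : AEStronglyMeasurable (fun x : ℝ => x) (μ.map ξ) := aestronglyMeasurable_id
  have hmsζ : AEStronglyMeasurable (fun x : ℝ => x) (μ.map ζ) := aestronglyMeasurable_id
  have hνint : Integrable (fun x : ℝ => x) (μ.map ξ) :=
    (integrable_map_measure hmsξ hξm.aemeasurable).2 hξint
  have hρint : Integrable (fun x : ℝ => x) (μ.map ζ) :=
    (integrable_map_measure hmsζ hζm.aemeasurable).2 hζint
  have hνmean : ∫ x, x ∂(μ.map ξ) = 0 := by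
    rw [integral_map hξm.aemeasurable hmsξ]; exact hξmean
  have hρmean : ∫ x, x ∂(μ.map ζ) = 0 := by
    rw [integral_map hζm.aemeasurable hmsζ]; exact hζmean
  have key := core' (μ.map ξ) (μ.map ζ) fξ fζ hfξm hfζm hdξ hdζ
    (le_trans zero_le_one hL) hfξL hfζL hνint hρint hνmean hρmean c
  calc ∫ q : ℝ × ℝ, (gft 0 q.1 q.2 - gft c q.1 q.2) ∂((μ.map ξ).prod (μ.map ζ))
      ≤ L * c ^ 2 := key
    _ = L * (m - π) ^ 2 := by rw [hcdef]; ring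
end

section
/- Let ξ and ζ be independent real-valued random variables with E[ξ] = E[ζ] = 0, E[|ξ|] < ∞, E[|ζ|] < ∞, admitting Lebesgue densities f_ξ and f_ζ. Let ε > 0 and c₀ > 0 be such that f_ξ(s) + f_ζ(s) ≥ 2c₀ for Lebesgue-almost every s with |s| ≤ ε. Then for every m ∈ ℝ, E[g(m, m + ξ, m + ζ)] − E[g(m + ε, m + ξ, m + ζ)] ≥ c₀·ε². -/
open MeasureTheory ProbabilityTheory
open scoped NNReal ENNReal

set_option maxHeartbeats 1000000 in
lemma gft_key (m ε x y : ℝ) (hε : 0 < ε) (hx0 : x ≠ 0) (hxε : x ≠ ε) (hy0 : y ≠ 0) (hyε : y ≠ ε) :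
    gft m (m + x) (m + y) - gft (m + ε) (m + x) (m + y)
      = (x - y) * ((if 0 < x ∧ x ≤ ε then (1:ℝ) else 0) - (if 0 < y ∧ y ≤ ε then (1:ℝ) else 0)) := by
  have hx : x < 0 ∨ (0 < x ∧ x < ε) ∨ ε < x := by
    rcases lt_or_gt_of_ne hx0 with h | h
    · exact Or.inl h
    · rcases lt_or_gt_of_ne hxε with h' | h'
      · exact Or.inr (Or.inl ⟨h, h'⟩)
      · exact Or.inr (Or.inr h')
  have hy : y < 0 ∨ (0 < y ∧ y < ε) ∨ ε < y := by
    rcases lt_or_gt_of_ne hy0 with h | h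
    · exact Or.inl h
    · rcases lt_or_gt_of_ne hyε with h' | h'
      · exact Or.inr (Or.inl ⟨h, h'⟩)
      · exact Or.inr (Or.inr h')
  unfold gft
  rw [min_add_add_left, max_add_add_left]
  rcases le_total x y with h | h <;>
    [rw [min_eq_left h, max_eq_right h]; rw [min_eq_right h, max_eq_left h]] <;>
  rcases hx with hx | ⟨hx1, hx2⟩ | hx <;>
  rcases hy with hy | ⟨hy1, hy2⟩ | hy <;>
  split_ifs <;>
  simp only [not_and_or, not_le, not_lt, add_le_add_iff_left, add_le_iff_nonpos_right,
    le_add_iff_nonneg_right] at * <;>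
  casesm* _ ∨ _, _ ∧ _ <;>
  linarith

/-- **Reverse self-bounding property.**  If `ξ, ζ` are independent, zero-mean, integrable
random variables with Lebesgue densities `fξ, fζ` satisfying `fξ(s) + fζ(s) ≥ 2c₀` for
a.e. `s` with `|s| ≤ ε` (where `ε, c₀ > 0`), then for every `m`,
`E[g(m, m+ξ, m+ζ)] − E[g(m+ε, m+ξ, m+ζ)] ≥ c₀·ε²`. -/
theorem reverse_self_bounding
    {Ω : Type*} [MeasurableSpace Ω] {μ : Measure Ω} [IsProbabilityMeasure μ]
    (ξ ζ : Ω → ℝ) (hξm : Measurable ξ) (hζm : Measurable ζ)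
    (hindep : IndepFun ξ ζ μ)
    (hξint : Integrable ξ μ) (hζint : Integrable ζ μ)
    (hξmean : ∫ ω, ξ ω ∂μ = 0) (hζmean : ∫ ω, ζ ω ∂μ = 0)
    (fξ fζ : ℝ → ℝ) (hfξm : Measurable fξ) (hfζm : Measurable fζ)
    (hdξ : Measure.map ξ μ = volume.withDensity (fun x => ENNReal.ofReal (fξ x)))
    (hdζ : Measure.map ζ μ = volume.withDensity (fun x => ENNReal.ofReal (fζ x)))
    (ε c₀ : ℝ) (hε : 0 < ε) (hc₀ : 0 < c₀)
    (hlower : ∀ᵐ s ∂(volume.restrict (Set.Icc (-ε) ε)), 2 * c₀ ≤ fξ s + fζ s)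
    (m : ℝ) :
    c₀ * ε ^ 2 ≤
      (∫ ω, gft m (m + ξ ω) (m + ζ ω) ∂μ) - ∫ ω, gft (m + ε) (m + ξ ω) (m + ζ ω) ∂μ := by
  classical
  set χ : ℝ → ℝ := fun u => if 0 < u ∧ u ≤ ε then 1 else 0 with hχdef
  have hχmeas : Measurable χ := by
    apply Measurable.ite _ measurable_const measurable_const
    exact measurableSet_Ioc (a := (0:ℝ)) (b := ε)
  set ψ : ℝ → ℝ := fun u => u * χ u with hψdef
  have hψmeas : Measurable ψ := measurable_id.mul hχmeas
  have hψnonneg : ∀ u, 0 ≤ ψ u := by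
    intro u
    simp only [hψdef, hχdef]
    split_ifs with h
    · simp only [mul_one]; exact h.1.le
    · simp
  have hψle : ∀ u, ‖ψ u‖ ≤ ε := by
    intro u
    simp only [hψdef, hχdef, Real.norm_eq_abs]
    split_ifs with h
    · rw [mul_one, abs_of_pos h.1]; exact h.2
    · simp [hε.le]
  -- a.e. avoidance of the bad lines
  have hns : ∀ (X : Ω → ℝ) (fX : ℝ → ℝ), Measurable X →
      Measure.map X μ = volume.withDensity (fun x => ENNReal.ofReal (fX x)) →
      ∀ c : ℝ, ∀ᵐ ω ∂μ, X ω ≠ c := by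
    intro X fX hX hd c
    rw [ae_iff]
    have hset : {ω | ¬ X ω ≠ c} = X ⁻¹' {c} := by ext ω; simp
    rw [hset, ← Measure.map_apply hX (measurableSet_singleton c), hd]
    exact withDensity_absolutelyContinuous volume _ (measure_singleton c)
  -- measurability and integrability of the gft terms
  have h1 : Measurable fun ω => m + ξ ω := measurable_const.add hξm
  have h2 : Measurable fun ω => m + ζ ω := measurable_const.add hζm
  have hgmeas : ∀ p : ℝ, Measurable (fun ω => gft p (m + ξ ω) (m + ζ ω)) := by
    intro p
    unfold gft
    exact Measurable.ite
      ((measurableSet_le (h1.min h2) measurable_const).inter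
        (measurableSet_le measurable_const (h1.max h2)))
      ((h1.max h2).sub (h1.min h2)) measurable_const
  have hgint : ∀ p : ℝ, Integrable (fun ω => gft p (m + ξ ω) (m + ζ ω)) μ := by
    intro p
    refine ((hξint.sub hζint).abs).mono' (hgmeas p).aestronglyMeasurable
      (ae_of_all _ fun ω => ?_)
    simp only [Real.norm_eq_abs, gft, Pi.sub_apply]
    split_ifs
    · rw [max_sub_min_eq_abs, abs_abs, abs_sub_comm]
      exact le_of_eq (by congr 1; ring)
    · simpa using abs_nonneg (ξ ω - ζ ω)
  -- integrability of the auxiliary functions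
  have hψξ : Integrable (fun ω => ψ (ξ ω)) μ :=
    Integrable.mono' (integrable_const ε) ((hψmeas.comp hξm)).aestronglyMeasurable
      (ae_of_all _ fun ω => hψle _)
  have hψζ : Integrable (fun ω => ψ (ζ ω)) μ :=
    Integrable.mono' (integrable_const ε) ((hψmeas.comp hζm)).aestronglyMeasurable
      (ae_of_all _ fun ω => hψle _)
  have hχabs : ∀ u, |χ u| ≤ 1 := by
    intro u; simp only [hχdef]; split_ifs <;> norm_num
  have hint1 : Integrable (fun ω => ξ ω * χ (ζ ω)) μ := by
    refine hξint.abs.mono' (hξm.mul (hχmeas.comp hζm)).aestronglyMeasurable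
      (ae_of_all _ fun ω => ?_)
    rw [Real.norm_eq_abs, abs_mul]
    calc |ξ ω| * |χ (ζ ω)| ≤ |ξ ω| * 1 := by
          exact mul_le_mul_of_nonneg_left (hχabs _) (abs_nonneg _)
      _ = |ξ ω| := mul_one _
  have hint2 : Integrable (fun ω => ζ ω * χ (ξ ω)) μ := by
    refine hζint.abs.mono' (hζm.mul (hχmeas.comp hξm)).aestronglyMeasurable
      (ae_of_all _ fun ω => ?_)
    rw [Real.norm_eq_abs, abs_mul]
    calc |ζ ω| * |χ (ξ ω)| ≤ |ζ ω| * 1 := by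
          exact mul_le_mul_of_nonneg_left (hχabs _) (abs_nonneg _)
      _ = |ζ ω| := mul_one _
  -- cross terms vanish by independence
  have hz1 : ∫ ω, ξ ω * χ (ζ ω) ∂μ = 0 := by
    have hi : IndepFun ξ (χ ∘ ζ) μ := by
      have := hindep.comp measurable_id hχmeas
      simpa using this
    have hmul := hi.integral_mul_eq_mul_integral hξint.aestronglyMeasurable
      ((hχmeas.comp hζm)).aestronglyMeasurable
    calc ∫ ω, ξ ω * χ (ζ ω) ∂μ = (∫ ω, ξ ω ∂μ) * ∫ ω, χ (ζ ω) ∂μ := hmul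
      _ = 0 := by rw [hξmean, zero_mul]
  have hz2 : ∫ ω, ζ ω * χ (ξ ω) ∂μ = 0 := by
    have hi : IndepFun ζ (χ ∘ ξ) μ := by
      have := hindep.symm.comp measurable_id hχmeas
      simpa using this
    have hmul := hi.integral_mul_eq_mul_integral hζint.aestronglyMeasurable
      ((hχmeas.comp hξm)).aestronglyMeasurable
    calc ∫ ω, ζ ω * χ (ξ ω) ∂μ = (∫ ω, ζ ω ∂μ) * ∫ ω, χ (ξ ω) ∂μ := hmul
      _ = 0 := by rw [hζmean, zero_mul]
  -- the key identity for the difference of expectations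
  have key : (∫ ω, gft m (m + ξ ω) (m + ζ ω) ∂μ)
        - (∫ ω, gft (m + ε) (m + ξ ω) (m + ζ ω) ∂μ)
      = (∫ ω, ψ (ξ ω) ∂μ) + ∫ ω, ψ (ζ ω) ∂μ := by
    rw [← integral_sub (hgint m) (hgint (m + ε))]
    have hcongr : (fun ω => gft m (m + ξ ω) (m + ζ ω) - gft (m + ε) (m + ξ ω) (m + ζ ω))
        =ᵐ[μ] fun ω => ψ (ξ ω) + ψ (ζ ω) - ξ ω * χ (ζ ω) - ζ ω * χ (ξ ω) := by
      filter_upwards [hns ξ fξ hξm hdξ 0, hns ξ fξ hξm hdξ ε, hns ζ fζ hζm hdζ 0,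
        hns ζ fζ hζm hdζ ε] with ω ha hb hc hd
      rw [gft_key m ε _ _ hε ha hb hc hd]
      simp only [hψdef, hχdef]
      ring
    have hA1 : Integrable (fun ω => ψ (ξ ω) + ψ (ζ ω)) μ := hψξ.add hψζ
    have hA2 : Integrable (fun ω => ψ (ξ ω) + ψ (ζ ω) - ξ ω * χ (ζ ω)) μ := hA1.sub hint1
    rw [integral_congr_ae hcongr, integral_sub hA2 hint2, integral_sub hA1 hint1,
      integral_add hψξ hψζ, hz1, hz2]
    ring
  rw [key]
  -- push to the real line via the densities
  have hmap : ∀ (X : Ω → ℝ) (fX : ℝ → ℝ), Measurable X → Measurable fX →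
      Measure.map X μ = volume.withDensity (fun x => ENNReal.ofReal (fX x)) →
      ((∫ ω, ψ (X ω) ∂μ) = ∫ x, ((fX x).toNNReal : ℝ≥0) • ψ x) ∧
        Integrable (fun x => ((fX x).toNNReal : ℝ≥0) • ψ x) volume := by
    intro X fX hX hfX hd
    have hcoe : (fun x => ENNReal.ofReal (fX x))
        = fun x => (((fX x).toNNReal : ℝ≥0) : ℝ≥0∞) := rfl
    have hψint_map : Integrable ψ (Measure.map X μ) := by
      haveI : IsProbabilityMeasure (Measure.map X μ) :=
        Measure.isProbabilityMeasure_map hX.aemeasurable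
      exact Integrable.mono' (integrable_const ε) hψmeas.aestronglyMeasurable
        (ae_of_all _ fun x => hψle x)
    constructor
    · rw [← integral_map hX.aemeasurable hψmeas.aestronglyMeasurable, hd, hcoe]
      exact integral_withDensity_eq_integral_smul hfX.real_toNNReal ψ
    · rw [← integrable_withDensity_iff_integrable_smul hfX.real_toNNReal]
      rw [hd, hcoe] at hψint_map
      exact hψint_map
  obtain ⟨heqξ, hintξ⟩ := hmap ξ fξ hξm hfξm hdξ
  obtain ⟨heqζ, hintζ⟩ := hmap ζ fζ hζm hfζm hdζ
  rw [heqξ, heqζ]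
  have hsmul : ∀ (fX : ℝ → ℝ) (x : ℝ),
      ((fX x).toNNReal : ℝ≥0) • ψ x = (fX x ⊔ 0) * ψ x := by
    intro fX x
    rw [NNReal.smul_def, Real.coe_toNNReal', smul_eq_mul]
  -- the combined integrand
  set G : ℝ → ℝ := fun x => ((fξ x).toNNReal : ℝ≥0) • ψ x + ((fζ x).toNNReal : ℝ≥0) • ψ x
    with hGdef
  have hGint : Integrable G volume := hintξ.add hintζ
  have hGnn : ∀ x, 0 ≤ G x := by
    intro x
    simp only [hGdef, hsmul]
    have := hψnonneg x
    positivity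
  have hsum : (∫ x, ((fξ x).toNNReal : ℝ≥0) • ψ x) + (∫ x, ((fζ x).toNNReal : ℝ≥0) • ψ x)
      = ∫ x, G x := (integral_add hintξ hintζ).symm
  rw [hsum]
  have hsub : Set.Ioc 0 ε ⊆ Set.Icc (-ε) ε := fun x hx => ⟨by linarith [hx.1], hx.2⟩
  have step1 : ∫ x in Set.Ioc 0 ε, G x ≤ ∫ x, G x :=
    setIntegral_le_integral hGint (ae_of_all _ hGnn)
  have step2 : ∫ x in Set.Ioc 0 ε, 2 * c₀ * x ≤ ∫ x in Set.Ioc 0 ε, G x := by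
    refine setIntegral_mono_ae_restrict
      (Continuous.integrableOn_Ioc (continuous_const.mul continuous_id)) hGint.integrableOn ?_
    filter_upwards [ae_restrict_of_ae_restrict_of_subset hsub hlower,
      ae_restrict_mem measurableSet_Ioc] with x hx hmem
    have hχx : χ x = 1 := if_pos ⟨hmem.1, hmem.2⟩
    have hbound : 2 * c₀ ≤ (fξ x ⊔ 0) + (fζ x ⊔ 0) :=
      le_trans hx (add_le_add (le_max_left _ _) (le_max_left _ _))
    calc 2 * c₀ * x ≤ ((fξ x ⊔ 0) + (fζ x ⊔ 0)) * x :=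
          mul_le_mul_of_nonneg_right hbound hmem.1.le
      _ = G x := by
          simp only [hGdef, hsmul, hψdef, hχx, mul_one]
          simp only [NNReal.smul_def, Real.coe_toNNReal', smul_eq_mul]
          ring
  have step3 : ∫ x in Set.Ioc 0 ε, 2 * c₀ * x = c₀ * ε ^ 2 := by
    rw [← intervalIntegral.integral_of_le hε.le]
    rw [intervalIntegral.integral_const_mul, integral_id]
    ring
  linarith
end

section
/- Let d ≥ 1, λ > 0, let Σ̂ and Σ be real symmetric d×d matrices with Σ̂ ⪰ (λ/2)·I_d (so Σ̂ is invertible), and let φ, μ̂ ∈ ℝ^d. Then ‖Σ̂⁻¹μ̂ − φ‖₂ ≤ (2/λ)·(√d·‖μ̂ − Σφ‖_∞ + ‖Σ − Σ̂‖_op·‖φ‖₂), where ‖·‖_op denotes the operator norm with respect to the Euclidean norm and ‖·‖_∞ the coordinate-wise maximum norm. -/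
open scoped Matrix

/-- **Deterministic plug-in estimator bound.**  If `Σ̂ ⪰ (λ/2)·I_d` (so `Σ̂` is
invertible), then for all `φ, μ̂ ∈ ℝ^d`,
`‖Σ̂⁻¹μ̂ − φ‖₂ ≤ (2/λ)·(√d·‖μ̂ − Σφ‖_∞ + ‖Σ − Σ̂‖_op·‖φ‖₂)`,
where `‖·‖_op` is the operator norm w.r.t. the Euclidean norm and `‖·‖_∞` the
coordinate-wise maximum norm. -/
theorem plugin_estimator_error_bound
    (d : ℕ) (hd : 1 ≤ d) (lam : ℝ) (hlam : 0 < lam)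
    (Sh S : Matrix (Fin d) (Fin d) ℝ) (hShsym : Sh.IsSymm) (hSsym : S.IsSymm)
    (hpsd : (Sh - (lam / 2) • (1 : Matrix (Fin d) (Fin d) ℝ)).PosSemidef)
    (φ μh : EuclideanSpace ℝ (Fin d)) :
    ‖(EuclideanSpace.equiv (Fin d) ℝ).symm (Sh⁻¹.mulVec μh) - φ‖
      ≤ (2 / lam) * (Real.sqrt d * (⨆ i, |μh i - S.mulVec φ i|)
          + ‖Matrix.toEuclideanCLM (𝕜 := ℝ) (S - Sh)‖ * ‖φ‖) := by
  have hc : (0:ℝ) < lam / 2 := by linarith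
  -- quadratic lower bound
  have hquad : ∀ x : Fin d → ℝ, (lam/2) * (x ⬝ᵥ x) ≤ x ⬝ᵥ Sh.mulVec x := by
    intro x
    have h0 := hpsd.dotProduct_mulVec_nonneg x
    simp only [star_trivial, Matrix.sub_mulVec, dotProduct_sub,
      Matrix.smul_mulVec, Matrix.one_mulVec, dotProduct_smul,
      smul_eq_mul] at h0
    linarith
  -- Sh is positive definite, hence invertible
  have hherm : Sh.IsHermitian := by
    ext i j
    rw [Matrix.conjTranspose_apply, star_trivial]
    exact congrFun (congrFun hShsym i) j
  have hpd : Sh.PosDef := by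
    refine Matrix.PosDef.of_dotProduct_mulVec_pos hherm (fun x hx => lt_of_lt_of_le ?_ (by simpa using hquad x))
    have : 0 < x ⬝ᵥ x := by
      simpa using Matrix.dotProduct_self_star_pos_iff (v := x) |>.2 hx
    positivity
  have hinv : Sh * Sh⁻¹ = 1 :=
    Matrix.mul_nonsing_inv _ (Matrix.isUnit_iff_isUnit_det _ |>.1 hpd.isUnit)
  -- the error vector
  set v : Fin d → ℝ := fun i => Sh⁻¹.mulVec μh i - φ i with hv
  have hShv : Sh.mulVec v = (fun i => μh i - S.mulVec φ i) + (S - Sh).mulVec φ := by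
    funext i
    have h1 : Sh.mulVec (Sh⁻¹.mulVec μh) = μh := by
      rw [Matrix.mulVec_mulVec, hinv, Matrix.one_mulVec]
    have h2 : Sh.mulVec v = Sh.mulVec (Sh⁻¹.mulVec μh) - Sh.mulVec φ := by
      rw [← Matrix.mulVec_sub]; rfl
    have := congrFun h2 i
    have := congrFun h1 i
    simp only [Matrix.sub_mulVec, Pi.add_apply, Pi.sub_apply] at *
    linarith
  -- move to EuclideanSpace
  have hinner : ∀ x y : Fin d → ℝ,
      (inner ℝ ((WithLp.equiv 2 (Fin d → ℝ)).symm x) ((WithLp.equiv 2 (Fin d → ℝ)).symm y) : ℝ)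
        = x ⬝ᵥ y := by
    intro x y
    simp [PiLp.inner_apply, dotProduct, mul_comm]
  set X := (WithLp.equiv 2 (Fin d → ℝ)).symm
  set e : EuclideanSpace ℝ (Fin d) := X v with he
  set a : EuclideanSpace ℝ (Fin d) := X (fun i => μh i - S.mulVec φ i) with ha
  set b : EuclideanSpace ℝ (Fin d) := X ((S - Sh).mulVec φ) with hb
  have hgoalvec : (EuclideanSpace.equiv (Fin d) ℝ).symm (Sh⁻¹.mulVec μh) - φ = e := by
    rfl
  have hnorme : ‖e‖^2 = v ⬝ᵥ v := by
    rw [← real_inner_self_eq_norm_sq]; exact hinner v v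
  -- main inequality
  have key : (lam/2) * ‖e‖^2 ≤ ‖e‖ * (‖a‖ + ‖b‖) := by
    have h1 : (lam/2) * ‖e‖^2 ≤ v ⬝ᵥ Sh.mulVec v := by rw [hnorme]; exact hquad v
    have h2 : v ⬝ᵥ Sh.mulVec v = (inner ℝ e (a + b) : ℝ) := by
      rw [hShv, ← hinner]
      congr 1
    have h3 : (inner ℝ e (a + b) : ℝ) ≤ ‖e‖ * ‖a + b‖ := real_inner_le_norm _ _
    have h4 : ‖a + b‖ ≤ ‖a‖ + ‖b‖ := norm_add_le _ _
    nlinarith [norm_nonneg e]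
  have hebound : ‖e‖ ≤ (2/lam) * (‖a‖ + ‖b‖) := by
    rcases eq_or_lt_of_le (norm_nonneg e) with h | h
    · rw [← h]; positivity
    · have hne : ‖e‖ ≠ 0 := ne_of_gt h
      have hlne : lam ≠ 0 := ne_of_gt hlam
      have h2 := mul_le_mul_of_nonneg_left key
        (le_of_lt (show (0:ℝ) < 2/(lam * ‖e‖) by positivity))
      calc ‖e‖ = (2/(lam * ‖e‖)) * ((lam/2) * ‖e‖^2) := by field_simp
        _ ≤ (2/(lam * ‖e‖)) * (‖e‖ * (‖a‖ + ‖b‖)) := h2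
        _ = (2/lam) * (‖a‖ + ‖b‖) := by field_simp
  -- bound ‖a‖ by sqrt d * sup norm
  set M : ℝ := ⨆ i, |μh i - S.mulVec φ i| with hM
  have hsup : ∀ i, |μh i - S.mulVec φ i| ≤ M := by
    intro i
    exact le_ciSup (f := fun i => |μh i - S.mulVec φ i|)
      (Set.Finite.bddAbove (Set.finite_range _)) i
  have hMnn : 0 ≤ M := le_trans (abs_nonneg _) (hsup ⟨0, hd⟩)
  have hanorm : ‖a‖ ≤ Real.sqrt d * M := by
    have : ‖a‖ = Real.sqrt (∑ i, |μh i - S.mulVec φ i|^2) := by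
      rw [EuclideanSpace.norm_eq]
      congr 1
    rw [this, show Real.sqrt d * M = Real.sqrt (d * M^2) by
      rw [Real.sqrt_mul (Nat.cast_nonneg d), Real.sqrt_sq hMnn]]
    apply Real.sqrt_le_sqrt
    calc ∑ i, |μh i - S.mulVec φ i|^2 ≤ ∑ _i : Fin d, M^2 :=
          Finset.sum_le_sum fun i _ => by
            have := hsup i
            nlinarith [abs_nonneg (μh i - S.mulVec φ i)]
      _ = d * M^2 := by simp [Finset.sum_const, mul_comm]
  -- bound ‖b‖ by operator norm
  have hbnorm : ‖b‖ ≤ ‖Matrix.toEuclideanCLM (𝕜 := ℝ) (S - Sh)‖ * ‖φ‖ := by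
    have : b = Matrix.toEuclideanCLM (𝕜 := ℝ) (S - Sh) φ := by
      rfl
    rw [this]
    exact (Matrix.toEuclideanCLM (𝕜 := ℝ) (S - Sh)).le_opNorm φ
  rw [hgoalvec]
  calc ‖e‖ ≤ (2/lam) * (‖a‖ + ‖b‖) := hebound
    _ ≤ (2/lam) * (Real.sqrt d * M + ‖Matrix.toEuclideanCLM (𝕜 := ℝ) (S - Sh)‖ * ‖φ‖) := by
        apply mul_le_mul_of_nonneg_left (add_le_add hanorm hbnorm) (by positivity)
end
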